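/- Let E be a real inner product space and let g, b ∈ E be orthonormal vectors. Fix θ ∈ ℝ and set ψ = sin(θ)·g + cos(θ)·b. Let R₁ : E → E be the linear map x ↦ x − 2⟨g, x⟩·g (sign flip of the g-component) and let R₂ : E → E be the linear map x ↦ 2⟨ψ, x⟩·ψ − x (reflection through the line spanned by ψ). Then for every α ∈ ℝ, (R₂ ∘ R₁)(sin(α)·g + cos(α)·b) = sin(α + 2θ)·g + cos(α + 2θ)·b; that is, one Grover iteration acts on the plane spanned by g and b as a rotation by angle 2θ. -/

import Mathlib

open Real

/-- One Grover iteration (oracle reflection followed by reflection through the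
line spanned by `ψ = sin θ • g + cos θ • b`) acts on the plane spanned by the
orthonormal vectors `g` and `b` as a rotation by angle `2θ`. -/
theorem grover_iteration_is_rotation
    {E : Type*} [NormedAddCommGroup E] [InnerProductSpace ℝ E]
    (g b : E) (hg : ‖g‖ = 1) (hb : ‖b‖ = 1) (hgb : (inner ℝ g b : ℝ) = 0)
    (θ : ℝ) (ψ : E) (hψ : ψ = Real.sin θ • g + Real.cos θ • b)
    (R₁ R₂ : E →ₗ[ℝ] E)
    (hR₁ : ∀ x, R₁ x = x - (2 * (inner ℝ g x : ℝ)) • g)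
    (hR₂ : ∀ x, R₂ x = (2 * (inner ℝ ψ x : ℝ)) • ψ - x) :
    ∀ α : ℝ, (R₂ ∘ R₁) (Real.sin α • g + Real.cos α • b) =
      Real.sin (α + 2 * θ) • g + Real.cos (α + 2 * θ) • b := by
  intro α
  have hgg : (inner ℝ g g : ℝ) = 1 := by
    rw [real_inner_self_eq_norm_sq, hg]; norm_num
  have hbb : (inner ℝ b b : ℝ) = 1 := by
    rw [real_inner_self_eq_norm_sq, hb]; norm_num
  have hbg : (inner ℝ b g : ℝ) = 0 := by rw [real_inner_comm]; exact hgb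
  simp only [Function.comp_apply, hR₁, hR₂, hψ, inner_add_left, inner_add_right,
    inner_smul_left, inner_smul_right, inner_sub_right, RCLike.conj_to_real,
    hgg, hbb, hgb, hbg, mul_zero, mul_one, zero_add, add_zero, zero_mul]
  have hs : Real.sin (α + 2 * θ) = Real.sin α * Real.cos (2*θ) + Real.cos α * Real.sin (2*θ) := by
    rw [Real.sin_add]
  have hc : Real.cos (α + 2 * θ) = Real.cos α * Real.cos (2*θ) - Real.sin α * Real.sin (2*θ) := by
    rw [Real.cos_add]
  rw [hs, hc, Real.cos_two_mul, Real.sin_two_mul]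
  have hpyth := Real.sin_sq_add_cos_sq θ
  match_scalars
  · linear_combination (-2 * Real.sin α) * hpyth
  · ring
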